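/- arXiv:1409.8203 — 8 statements merged into one kernel-verified Lean document; each statement's English description precedes it below -/
import Mathlib

section
/- Let A, B, C be Banach algebras over 𝕂, let α : A → C and β : B → C be continuous surjective algebra homomorphisms, and let D, γ, δ be the pullback data. Suppose β has a right inverse which is a continuous algebra homomorphism. Then δ has a right inverse which is a continuous algebra homomorphism if and only if α has a right inverse which is a continuous algebra homomorphism. -/
/- The pullback of two continuous algebra homomorphisms `α : A → C` and `β : B → C`
between (possibly non-unital) Banach algebras, realised as a closed subalgebra of the
Banach-algebra direct sum `A × B` (whose norm is the maximum of the coordinate norms). -/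

variable {𝕜 : Type*} [RCLike 𝕜]
variable {A B C : Type*}
  [NonUnitalNormedRing A] [NormedSpace 𝕜 A] [IsScalarTower 𝕜 A A] [SMulCommClass 𝕜 A A]
  [CompleteSpace A]
  [NonUnitalNormedRing B] [NormedSpace 𝕜 B] [IsScalarTower 𝕜 B B] [SMulCommClass 𝕜 B B]
  [CompleteSpace B]
  [NonUnitalNormedRing C] [NormedSpace 𝕜 C] [IsScalarTower 𝕜 C C] [SMulCommClass 𝕜 C C]
  [CompleteSpace C]

/-- The pullback `D = {(a,b) ∈ A ⊕ B : α(a) = β(b)}`. -/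
def pullback (α : A →ₙₐ[𝕜] C) (β : B →ₙₐ[𝕜] C) : NonUnitalSubalgebra 𝕜 (A × B) where
  carrier := {p | α p.1 = β p.2}
  add_mem' := by intro p q hp hq; simp only [Set.mem_setOf_eq] at *; simp [map_add, hp, hq]
  zero_mem' := by simp
  mul_mem' := by intro p q hp hq; simp only [Set.mem_setOf_eq] at *; simp [map_mul, hp, hq]
  smul_mem' := by intro c p hp; simp only [Set.mem_setOf_eq] at *; simp [map_smul, hp]


/-- Suppose `β` has a right inverse which is a continuous algebra homomorphism. Then the
restricted coordinate projection `δ : D → B, (a,b) ↦ b` has a right inverse which is a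
continuous algebra homomorphism if and only if `α` does. -/
theorem pullback_splits_strongly_iff (α : A →ₙₐ[𝕜] C) (β : B →ₙₐ[𝕜] C)
    (hα : Continuous α) (hβ : Continuous β)
    (hαsurj : Function.Surjective α) (hβsurj : Function.Surjective β)
    (hβsplit : ∃ ρ : C →ₙₐ[𝕜] B, Continuous ρ ∧ ∀ c, β (ρ c) = c) :
    (∃ τ : B →ₙₐ[𝕜] pullback α β, Continuous τ ∧ ∀ b, ((τ b : A × B)).2 = b) ↔
    (∃ σ : C →ₙₐ[𝕜] A, Continuous σ ∧ ∀ c, α (σ c) = c) := by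
  obtain ⟨ρ, hρcont, hρ⟩ := hβsplit
  constructor
  · rintro ⟨τ, hτcont, hτ⟩
    refine ⟨{ toFun := fun c => ((τ (ρ c) : A × B)).1
              map_add' := by intro x y; simp
              map_mul' := by intro x y; simp
              map_smul' := by intro r x; simp
              map_zero' := by simp }, ?_, ?_⟩
    · exact (continuous_fst.comp (continuous_subtype_val.comp hτcont)).comp hρcont
    · intro c
      have hmem : (τ (ρ c) : A × B) ∈ pullback α β := (τ (ρ c)).2
      have : α ((τ (ρ c) : A × B)).1 = β ((τ (ρ c) : A × B)).2 := hmem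
      show α ((τ (ρ c) : A × B)).1 = c
      rw [this, hτ, hρ]
  · rintro ⟨σ, hσcont, hσ⟩
    refine ⟨{ toFun := fun b => ⟨(σ (β b), b), by show α (σ (β b)) = β b; rw [hσ]⟩
              map_add' := by intro x y; ext <;> simp
              map_mul' := by intro x y; ext <;> simp
              map_smul' := by intro r x; ext <;> simp
              map_zero' := by ext <;> simp }, ?_, ?_⟩
    · exact Continuous.subtype_mk (((hσcont.comp hβ)).prodMk continuous_id) _
    · intro b; rfl
end

section
/- Let A, B, C be Banach algebras over 𝕂, let α : A → C and β : B → C be continuous surjective algebra homomorphisms, and let D, γ, δ be the pullback data. Suppose β has a right inverse which is an algebra homomorphism (not necessarily continuous). Then δ has a right inverse which is an algebra homomorphism if and only if α has a right inverse which is an algebra homomorphism. -/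
/- The pullback of two continuous algebra homomorphisms `α : A → C` and `β : B → C`
between (possibly non-unital) Banach algebras, realised as a closed subalgebra of the
Banach-algebra direct sum `A × B` (whose norm is the maximum of the coordinate norms). -/

variable {𝕜 : Type*} [RCLike 𝕜]
variable {A B C : Type*}
  [NonUnitalNormedRing A] [NormedSpace 𝕜 A] [IsScalarTower 𝕜 A A] [SMulCommClass 𝕜 A A]
  [CompleteSpace A]
  [NonUnitalNormedRing B] [NormedSpace 𝕜 B] [IsScalarTower 𝕜 B B] [SMulCommClass 𝕜 B B]
  [CompleteSpace B]
  [NonUnitalNormedRing C] [NormedSpace 𝕜 C] [IsScalarTower 𝕜 C C] [SMulCommClass 𝕜 C C]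
  [CompleteSpace C]

/-- Suppose `β` has a right inverse which is an algebra homomorphism (not necessarily
continuous). Then the restricted coordinate projection `δ : D → B, (a,b) ↦ b` has a right
inverse which is an algebra homomorphism if and only if `α` does. -/
theorem pullback_splits_algebraically_iff (α : A →ₙₐ[𝕜] C) (β : B →ₙₐ[𝕜] C)
    (hα : Continuous α) (hβ : Continuous β)
    (hαsurj : Function.Surjective α) (hβsurj : Function.Surjective β)
    (hβsplit : ∃ ρ : C →ₙₐ[𝕜] B, ∀ c, β (ρ c) = c) :
    (∃ τ : B →ₙₐ[𝕜] pullback α β, ∀ b, ((τ b : A × B)).2 = b) ↔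
    (∃ σ : C →ₙₐ[𝕜] A, ∀ c, α (σ c) = c) := by
  obtain ⟨ρ, hρ⟩ := hβsplit
  constructor
  · rintro ⟨τ, hτ⟩
    refine ⟨{ toFun := fun c => ((τ (ρ c) : A × B)).1
              map_add' := by intro x y; simp
              map_zero' := by simp
              map_mul' := by intro x y; simp
              map_smul' := by intro c x; simp }, ?_⟩
    intro c
    have hmem : α ((τ (ρ c) : A × B)).1 = β ((τ (ρ c) : A × B)).2 := (τ (ρ c)).2
    show α ((τ (ρ c) : A × B)).1 = c
    rw [hmem, hτ, hρ]
  · rintro ⟨σ, hσ⟩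
    refine ⟨{ toFun := fun b => ⟨(σ (β b), b), show α (σ (β b)) = β b from hσ _⟩
              map_add' := by intro x y; ext <;> simp
              map_zero' := by ext <;> simp
              map_mul' := by intro x y; ext <;> simp
              map_smul' := by intro c x; ext <;> simp }, fun b => rfl⟩
end

section
/- Let A, B, C be Banach algebras over 𝕂, let α : A → C and β : B → C be continuous surjective algebra homomorphisms, and let D, γ, δ be the pullback data. Suppose β has a right inverse which is a bounded linear map. Then δ has a right inverse which is a bounded linear map if and only if α has a right inverse which is a bounded linear map. -/
/- The pullback of two continuous algebra homomorphisms `α : A → C` and `β : B → C`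
between (possibly non-unital) Banach algebras, realised as a closed subalgebra of the
Banach-algebra direct sum `A × B` (whose norm is the maximum of the coordinate norms). -/

variable {𝕜 : Type*} [RCLike 𝕜]
variable {A B C : Type*}
  [NonUnitalNormedRing A] [NormedSpace 𝕜 A] [IsScalarTower 𝕜 A A] [SMulCommClass 𝕜 A A]
  [CompleteSpace A]
  [NonUnitalNormedRing B] [NormedSpace 𝕜 B] [IsScalarTower 𝕜 B B] [SMulCommClass 𝕜 B B]
  [CompleteSpace B]
  [NonUnitalNormedRing C] [NormedSpace 𝕜 C] [IsScalarTower 𝕜 C C] [SMulCommClass 𝕜 C C]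
  [CompleteSpace C]

/-- Suppose `β` has a right inverse which is a bounded linear map. Then the restricted
coordinate projection `δ : D → B, (a,b) ↦ b` has a right inverse which is a bounded
linear map if and only if `α` does. -/
theorem pullback_admissible_iff (α : A →ₙₐ[𝕜] C) (β : B →ₙₐ[𝕜] C)
    (hα : Continuous α) (hβ : Continuous β)
    (hαsurj : Function.Surjective α) (hβsurj : Function.Surjective β)
    (hβsplit : ∃ ρ : C →L[𝕜] B, ∀ c, β (ρ c) = c) :
    (∃ τ : B →L[𝕜] pullback α β, ∀ b, ((τ b : A × B)).2 = b) ↔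
    (∃ σ : C →L[𝕜] A, ∀ c, α (σ c) = c) := by
  obtain ⟨ρ, hρ⟩ := hβsplit
  constructor
  · rintro ⟨τ, hτ⟩
    refine ⟨(ContinuousLinearMap.fst 𝕜 A B).comp
      (((pullback α β).toSubmodule.subtypeL).comp (τ.comp ρ)), fun c => ?_⟩
    have hm : α ((τ (ρ c) : A × B)).1 = β ((τ (ρ c) : A × B)).2 := (τ (ρ c)).2
    simp only [ContinuousLinearMap.comp_apply, Submodule.subtypeL_apply,
      ContinuousLinearMap.coe_fst']
    show α ((τ (ρ c) : A × B)).1 = c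
    rw [hm, hτ, hρ]
  · rintro ⟨σ, hσ⟩
    let βL : B →L[𝕜] C := ⟨{ toFun := β, map_add' := map_add β, map_smul' := map_smul β }, hβ⟩
    refine ⟨((σ.comp βL).prod (ContinuousLinearMap.id 𝕜 B)).codRestrict
      (pullback α β).toSubmodule (fun b => ?_), fun b => rfl⟩
    show α (σ (β b)) = β b
    exact hσ (β b)
end

section
/- Let A, B, C be Banach algebras over 𝕂, let α : A → C and β : B → C be continuous surjective algebra homomorphisms such that: the extension determined by α is singular and admissible (α has a bounded linear right inverse) but α has no right inverse which is a continuous algebra homomorphism, while β has a right inverse which is a continuous algebra homomorphism. Let D, δ be the pullback data. Then the extension 0 → ker δ → D → B → 0 is singular and admissible, but δ has no right inverse which is a continuous algebra homomorphism. -/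
/- The pullback of two continuous algebra homomorphisms `α : A → C` and `β : B → C`
between (possibly non-unital) Banach algebras, realised as a closed subalgebra of the
Banach-algebra direct sum `A × B` (whose norm is the maximum of the coordinate norms). -/

variable {𝕜 : Type*} [RCLike 𝕜]
variable {A B C : Type*}
  [NonUnitalNormedRing A] [NormedSpace 𝕜 A] [IsScalarTower 𝕜 A A] [SMulCommClass 𝕜 A A]
  [CompleteSpace A]
  [NonUnitalNormedRing B] [NormedSpace 𝕜 B] [IsScalarTower 𝕜 B B] [SMulCommClass 𝕜 B B]
  [CompleteSpace B]
  [NonUnitalNormedRing C] [NormedSpace 𝕜 C] [IsScalarTower 𝕜 C C] [SMulCommClass 𝕜 C C]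
  [CompleteSpace C]

/-- Suppose that the extension determined by `α` is singular and admissible but does not
split strongly, while `β` has a right inverse which is a continuous algebra homomorphism.
Then the extension `0 → ker δ → D → B → 0` determined by the restricted coordinate
projection `δ : D → B, (a,b) ↦ b` is singular and admissible, but `δ` has no right
inverse which is a continuous algebra homomorphism. -/
theorem pullback_singular_admissible_not_strongly_split
    (α : A →ₙₐ[𝕜] C) (β : B →ₙₐ[𝕜] C)
    (hα : Continuous α) (hβ : Continuous β)
    (hαsurj : Function.Surjective α) (hβsurj : Function.Surjective β)
    (hαsing : ∀ a₁ a₂ : A, α a₁ = 0 → α a₂ = 0 → a₁ * a₂ = 0)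
    (hαadm : ∃ σ : C →L[𝕜] A, ∀ c, α (σ c) = c)
    (hαnotstrong : ¬ ∃ σ : C →ₙₐ[𝕜] A, Continuous σ ∧ ∀ c, α (σ c) = c)
    (hβsplit : ∃ ρ : C →ₙₐ[𝕜] B, Continuous ρ ∧ ∀ c, β (ρ c) = c) :
    (∀ d₁ d₂ : pullback α β, (d₁ : A × B).2 = 0 → (d₂ : A × B).2 = 0 → d₁ * d₂ = 0) ∧
    (∃ τ : B →L[𝕜] pullback α β, ∀ b, ((τ b : A × B)).2 = b) ∧
    ¬ (∃ τ : B →ₙₐ[𝕜] pullback α β, Continuous τ ∧ ∀ b, ((τ b : A × B)).2 = b) := by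

  refine ⟨?_, ?_, ?_⟩
  · intro d₁ d₂ h₁ h₂
    have hm₁ : α (d₁ : A × B).1 = β (d₁ : A × B).2 := d₁.2
    have hm₂ : α (d₂ : A × B).1 = β (d₂ : A × B).2 := d₂.2
    have ha₁ : α (d₁ : A × B).1 = 0 := by rw [hm₁, h₁]; simp
    have ha₂ : α (d₂ : A × B).1 = 0 := by rw [hm₂, h₂]; simp
    ext
    · exact hαsing _ _ ha₁ ha₂
    · show (d₁ : A × B).2 * (d₂ : A × B).2 = 0
      rw [h₁, zero_mul]
  · obtain ⟨σ, hσ⟩ := hαadm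
    refine ⟨⟨⟨⟨fun b => ⟨(σ (β b), b), hσ (β b)⟩, ?_⟩, ?_⟩, ?_⟩, fun b => rfl⟩
    · intro x y
      ext <;> simp [map_add]
    · intro c x
      ext <;> simp [map_smul]
    · exact Continuous.subtype_mk ((σ.continuous.comp hβ).prodMk continuous_id) _
  · rintro ⟨τ, hτc, hτ⟩
    obtain ⟨ρ, hρc, hρ⟩ := hβsplit
    refine hαnotstrong ⟨((NonUnitalAlgHom.fst 𝕜 A B).comp
      (NonUnitalSubalgebraClass.subtype (pullback α β))).comp (τ.comp ρ), ?_, ?_⟩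
    · exact continuous_fst.comp (continuous_subtype_val.comp (hτc.comp hρc))
    · intro c
      have hmem : α (τ (ρ c) : A × B).1 = β (τ (ρ c) : A × B).2 := (τ (ρ c)).2
      show α (τ (ρ c) : A × B).1 = c
      rw [hmem, hτ, hρ]
end

section
/- Let q : ℓ¹(ℕ) → ℓ²(ℕ) be a bounded linear surjection. Equip ℓ¹(ℕ) and ℓ²(ℕ) with the trivial (zero) product, and let A = ℓ¹(ℕ)^~ and C = ℓ²(ℕ)^~ be their unitizations. Define α : A → C by α(x + λ1) = q(x) + λ1 for x ∈ ℓ¹(ℕ) and λ ∈ 𝕂. Then α is a continuous surjective algebra homomorphism with ker α = ker q, the extension 0 → ker α → A → C → 0 is singular, α has a right inverse which is an algebra homomorphism (so the extension splits algebraically), but α has no bounded linear right inverse (the extension is not admissible). -/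
/- Here `TrivSqZeroExt 𝕜 X` is the unitization `X^~ = X ⊕ 𝕜1` of the Banach space `X`
equipped with the trivial (zero) product; its multiplication is
`(x + λ1)(y + μ1) = λ•y + μ•x + λμ1` and its norm is `‖x + λ1‖ = ‖x‖ + |λ|`
(the ℓ¹-norm instances on `TrivSqZeroExt`). -/

open TrivSqZeroExt
open scoped Topology
open Filter

section Aux

variable {𝕜 : Type*} [RCLike 𝕜]

theorem aux_l1_hasSum (f : lp (fun _ : ℕ => 𝕜) 1) : HasSum (fun i => ‖f i‖) ‖f‖ := by
  have h := lp.hasSum_norm (p := 1) (E := fun _ : ℕ => 𝕜) (by norm_num) f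
  simpa using h

theorem aux_coord_null (φ : lp (fun _ : ℕ => 𝕜) 2 →L[𝕜] 𝕜) :
    Filter.Tendsto (fun m => ‖φ (lp.single 2 m 1)‖) Filter.atTop (𝓝 0) := by
  set a : ℕ → 𝕜 := fun m => φ (lp.single 2 m 1) with ha
  have hbound : ∀ s : Finset ℕ, ∑ m ∈ s, ‖a m‖ ^ 2 ≤ ‖φ‖ ^ 2 := by
    intro s
    set y : lp (fun _ : ℕ => 𝕜) 2 := ∑ m ∈ s, lp.single 2 m ((starRingEnd 𝕜) (a m)) with hy
    have h1 : φ y = ((∑ m ∈ s, ‖a m‖ ^ 2 : ℝ) : 𝕜) := by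
      rw [hy, map_sum]
      rw [RCLike.ofReal_sum]
      refine Finset.sum_congr rfl fun m _ => ?_
      have : lp.single (E := fun _ : ℕ => 𝕜) 2 m ((starRingEnd 𝕜) (a m))
          = (starRingEnd 𝕜) (a m) • lp.single 2 m (1 : 𝕜) := by
        rw [← lp.single_smul]
        congr 1
        simp
      rw [this, map_smul, smul_eq_mul,
        show φ (lp.single 2 m 1) = a m from rfl, RCLike.conj_mul]
      norm_cast
    have h2 : ‖y‖ ^ (2 : ℝ) = ∑ m ∈ s, ‖a m‖ ^ 2 := by
      have h := lp.norm_sum_single (p := 2) (E := fun _ : ℕ => 𝕜) (by norm_num)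
        (fun m => (starRingEnd 𝕜) (a m)) s
      rw [ENNReal.toReal_ofNat] at h
      rw [← hy] at h
      rw [h]
      refine Finset.sum_congr rfl fun m _ => ?_
      rw [RCLike.norm_conj]
      rw [show ((2:ℝ)) = ((2:ℕ):ℝ) by norm_num, Real.rpow_natCast]
    have h3 : (∑ m ∈ s, ‖a m‖ ^ 2) ≤ ‖φ‖ * ‖y‖ := by
      calc (∑ m ∈ s, ‖a m‖ ^ 2) = ‖φ y‖ := by
            rw [h1, RCLike.norm_ofReal, abs_of_nonneg (by positivity)]
        _ ≤ ‖φ‖ * ‖y‖ := φ.le_opNorm y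
    have h2' : ‖y‖ ^ 2 = ∑ m ∈ s, ‖a m‖ ^ 2 := by
      rw [← h2, show ((2:ℝ)) = ((2:ℕ):ℝ) by norm_num, Real.rpow_natCast]
    have hS : (0:ℝ) ≤ ∑ m ∈ s, ‖a m‖ ^ 2 :=
      Finset.sum_nonneg fun m _ => sq_nonneg ‖a m‖
    rcases eq_or_lt_of_le (norm_nonneg y) with h0 | h0
    · rw [← h2', ← h0]
      simpa using sq_nonneg ‖φ‖
    · have hy' : ‖y‖ ≤ ‖φ‖ := by
        have hh : ‖y‖ * ‖y‖ ≤ ‖φ‖ * ‖y‖ := by rw [← pow_two, h2']; exact h3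
        exact le_of_mul_le_mul_right hh h0
      rw [← h2']
      exact pow_le_pow_left₀ (norm_nonneg y) hy' 2
  have hsum : Summable fun m => ‖a m‖ ^ 2 :=
    summable_of_sum_range_le (fun n => by positivity) fun n => hbound (Finset.range n)
  have ht2 : Filter.Tendsto (fun m => ‖a m‖ ^ 2) Filter.atTop (𝓝 0) :=
    hsum.tendsto_atTop_zero
  have := (Real.continuous_sqrt.tendsto 0).comp ht2
  simp only [Function.comp_def, Real.sqrt_zero] at this
  refine this.congr fun m => ?_
  rw [Real.sqrt_sq (norm_nonneg _)]

set_option maxHeartbeats 1000000 in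
theorem key_no_right_inverse
    (q : lp (fun _ : ℕ => 𝕜) 1 →L[𝕜] lp (fun _ : ℕ => 𝕜) 2) :
    ¬ ∃ s : lp (fun _ : ℕ => 𝕜) 2 →L[𝕜] lp (fun _ : ℕ => 𝕜) 1, ∀ y, q (s y) = y := by
  rintro ⟨s, hs⟩
  set v : ℕ → lp (fun _ : ℕ => 𝕜) 2 := fun m => lp.single 2 m 1 with hv
  have hv1 : ∀ m, ‖v m‖ = 1 := by
    intro m
    have := lp.norm_single (p := 2) (E := fun _ : ℕ => 𝕜) (by norm_num) m (1:𝕜)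
    exact this.trans norm_one
  set x : ℕ → lp (fun _ : ℕ => 𝕜) 1 := fun m => s (v m) with hx
  have hkey : ∀ m, (1:ℝ) ≤ ‖q‖ * ‖x m‖ := by
    intro m
    have h1 : ‖q (x m)‖ ≤ ‖q‖ * ‖x m‖ := q.le_opNorm _
    rw [hs (v m)] at h1
    rwa [hv1 m] at h1
  have hq0 : (0:ℝ) < ‖q‖ := by
    rcases (norm_nonneg q).lt_or_eq with h | h
    · exact h
    · exfalso; have := hkey 0; rw [← h] at this; simp at this; linarith
  set c : ℝ := ‖q‖⁻¹ with hcdef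
  have hc : 0 < c := inv_pos.2 hq0
  have hxc : ∀ m, c ≤ ‖x m‖ := by
    intro m
    rw [hcdef, inv_eq_one_div, div_le_iff₀ hq0]
    have := hkey m
    linarith [mul_comm ‖q‖ ‖x m‖ ▸ this]
  -- coordinatewise null
  have coordNull : ∀ i : ℕ, Tendsto (fun m => ‖x m i‖) atTop (𝓝 0) := by
    intro i
    have hb : ∀ y : lp (fun _ : ℕ => 𝕜) 2, ‖(s y) i‖ ≤ ‖s‖ * ‖y‖ := fun y =>
      (lp.norm_apply_le_norm (by norm_num) (s y) i).trans (s.le_opNorm y)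
    let φ : lp (fun _ : ℕ => 𝕜) 2 →L[𝕜] 𝕜 :=
      LinearMap.mkContinuous
        { toFun := fun y => (s y) i
          map_add' := by
            intro y z
            show (s (y + z)) i = (s y) i + (s z) i
            rw [map_add, lp.coeFn_add]; rfl
          map_smul' := by
            intro a y
            show (s (a • y)) i = a • (s y) i
            rw [map_smul, lp.coeFn_smul]; rfl } ‖s‖ hb
    have := aux_coord_null φ
    exact this
  -- tail control lemma
  have tail : ∀ (f : lp (fun _ : ℕ => 𝕜) 1) (δ : ℝ), 0 < δ → ∃ G : Finset ℕ,
      (‖f‖ - δ ≤ ∑ i ∈ G, ‖f i‖) ∧ ∀ T : Finset ℕ, Disjoint T G → ∑ i ∈ T, ‖f i‖ ≤ δ := by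
    intro f δ hδ
    have h := aux_l1_hasSum f
    obtain ⟨G, hG⟩ := (h.eventually (eventually_gt_nhds (by linarith : ‖f‖ - δ < ‖f‖))).exists
    refine ⟨G, hG.le, fun T hT => ?_⟩
    have hsum : ∑ i ∈ T ∪ G, ‖f i‖ ≤ ‖f‖ :=
      sum_le_hasSum _ (fun i _ => norm_nonneg _) h
    rw [Finset.sum_union hT] at hsum
    linarith
  -- choose K and δ
  set K : ℕ := ⌈(2 * ‖s‖ / c) ^ 2⌉₊ + 1 with hKdef
  set δ : ℝ := c / (2 * (K + 1)) with hδdef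
  have hδ : 0 < δ := by positivity
  -- the inductive step
  have step : ∀ (m : ℕ) (U : Finset ℕ), ∃ n G, m < n ∧ (∑ i ∈ U, ‖x n i‖ ≤ δ) ∧
      (‖x n‖ - δ ≤ ∑ i ∈ G, ‖x n i‖) ∧
      ∀ T : Finset ℕ, Disjoint T G → ∑ i ∈ T, ‖x n i‖ ≤ δ := by
    intro m U
    have ht : Tendsto (fun n => ∑ i ∈ U, ‖x n i‖) atTop (𝓝 0) := by
      have := tendsto_finset_sum U (fun i (_ : i ∈ U) => coordNull i)
      simpa using this
    have h1 : ∀ᶠ n in atTop, ∑ i ∈ U, ‖x n i‖ < δ := ht.eventually (eventually_lt_nhds hδ)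
    obtain ⟨n, hn1, hn2⟩ := (h1.and (eventually_gt_atTop m)).exists
    obtain ⟨G, hG1, hG2⟩ := tail (x n) δ hδ
    exact ⟨n, G, hn2, hn1.le, hG1, hG2⟩
  choose nf Gf hlt hUsum hGmass hGtail using step
  -- the recursive construction
  set σ : ℕ → ℕ × Finset ℕ :=
    fun k => Nat.rec ((0 : ℕ), (∅ : Finset ℕ))
      (fun _ p => (nf p.1 p.2, p.2 ∪ Gf p.1 p.2)) k with hσ
  set n : ℕ → ℕ := fun k => nf (σ k).1 (σ k).2 with hn
  set G : ℕ → Finset ℕ := fun k => Gf (σ k).1 (σ k).2 with hG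
  set U : ℕ → Finset ℕ := fun k => (σ k).2 with hU
  have hσs : ∀ k, σ (k + 1) = (n k, U k ∪ G k) := fun k => rfl
  have hUsucc : ∀ k, U (k + 1) = U k ∪ G k := fun k => congrArg Prod.snd (hσs k)
  have hUmono : ∀ j k, j ≤ k → U j ⊆ U k := by
    intro j k hjk
    induction k with
    | zero => rw [Nat.le_zero.1 hjk]
    | succ k ih =>
      rcases Nat.lt_succ_iff_lt_or_eq.1 (Nat.lt_succ_of_le hjk) with h | h
      · exact (ih (Nat.lt_succ_iff.1 h)).trans
          (by rw [hUsucc k]; exact Finset.subset_union_left)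
      · rw [h]
  have hGsubU : ∀ k, G k ⊆ U (k + 1) := by
    intro k; rw [hUsucc k]; exact Finset.subset_union_right
  have hmono : StrictMono n := by
    refine strictMono_nat_of_lt_succ fun k => ?_
    have : (σ (k + 1)).1 = n k := congrArg Prod.fst (hσs k)
    have h2 := hlt (σ (k + 1)).1 (σ (k + 1)).2
    rw [this] at h2
    exact h2
  have hUbd : ∀ k, ∑ i ∈ U k, ‖x (n k) i‖ ≤ δ := fun k => hUsum (σ k).1 (σ k).2
  have hmass : ∀ k, ‖x (n k)‖ - δ ≤ ∑ i ∈ G k, ‖x (n k) i‖ := fun k => hGmass (σ k).1 (σ k).2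
  have htail : ∀ k (T : Finset ℕ), Disjoint T (G k) → ∑ i ∈ T, ‖x (n k) i‖ ≤ δ :=
    fun k => hGtail (σ k).1 (σ k).2
  set F : ℕ → Finset ℕ := fun k => G k \ U k with hF
  have hFG : ∀ k, F k ⊆ G k := fun k => Finset.sdiff_subset
  have hFU : ∀ k, Disjoint (F k) (U k) := fun k => Finset.sdiff_disjoint
  -- cross terms
  have hcross : ∀ j k, j ≠ k → ∑ i ∈ F k, ‖x (n j) i‖ ≤ δ := by
    intro j k hjk
    rcases lt_or_gt_of_ne hjk with h | h
    · -- j < k : F k is disjoint from G j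
      refine htail j (F k) ?_
      have : G j ⊆ U k := (hGsubU j).trans (hUmono _ _ h)
      exact (Finset.disjoint_of_subset_right this (hFU k))
    · -- k < j : F k ⊆ U j
      have hsub : F k ⊆ U j := (hFG k).trans ((hGsubU k).trans (hUmono _ _ h))
      calc ∑ i ∈ F k, ‖x (n j) i‖ ≤ ∑ i ∈ U j, ‖x (n j) i‖ :=
            Finset.sum_le_sum_of_subset_of_nonneg hsub fun _ _ _ => norm_nonneg _
        _ ≤ δ := hUbd j
  -- main mass of each block
  have hmain : ∀ k, c - 2 * δ ≤ ∑ i ∈ F k, ‖x (n k) i‖ := by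
    intro k
    have hsplit : ∑ i ∈ G k ∩ U k, ‖x (n k) i‖ + ∑ i ∈ F k, ‖x (n k) i‖
        = ∑ i ∈ G k, ‖x (n k) i‖ := Finset.sum_inter_add_sum_sdiff _ _ _
    have hinter : ∑ i ∈ G k ∩ U k, ‖x (n k) i‖ ≤ δ :=
      (Finset.sum_le_sum_of_subset_of_nonneg Finset.inter_subset_right
        fun _ _ _ => norm_nonneg _).trans (hUbd k)
    have := hmass k
    have hxk := hxc (n k)
    linarith
  -- pairwise disjointness of the blocks
  have hFdisj : ∀ j k, j ≠ k → Disjoint (F j) (F k) := by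
    intro j k hjk
    rcases lt_or_gt_of_ne hjk with h | h
    · have : F j ⊆ U k := (hFG j).trans ((hGsubU j).trans (hUmono _ _ h))
      exact (Finset.disjoint_of_subset_left this (hFU k).symm).symm.symm
    · have : F k ⊆ U j := (hFG k).trans ((hGsubU k).trans (hUmono _ _ h))
      exact Finset.disjoint_of_subset_right this (hFU j)
  -- the test vector
  set u : lp (fun _ : ℕ => 𝕜) 2 := ∑ k ∈ Finset.range K, v (n k) with hu
  have hsu : s u = ∑ k ∈ Finset.range K, x (n k) := by rw [hu, map_sum]
  have hsucoord : ∀ i, (s u) i = ∑ k ∈ Finset.range K, x (n k) i := by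
    intro i
    rw [hsu, lp.coeFn_sum, Finset.sum_apply]
  -- norm of u
  have hu2 : ‖u‖ ^ (2 : ℕ) = (K : ℝ) := by
    have himg : u = ∑ i ∈ (Finset.range K).image n, lp.single 2 i ((fun _ => (1:𝕜)) i) := by
      rw [Finset.sum_image (fun a _ b _ h => hmono.injective h)]
    have h := lp.norm_sum_single (p := 2) (E := fun _ : ℕ => 𝕜) (by norm_num)
      (fun _ => (1:𝕜)) ((Finset.range K).image n)
    rw [ENNReal.toReal_ofNat, ← himg] at h
    have hcard : ((Finset.range K).image n).card = K := by
      rw [Finset.card_image_of_injective _ hmono.injective, Finset.card_range]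
    rw [show ((2:ℝ)) = ((2:ℕ):ℝ) by norm_num, Real.rpow_natCast] at h
    rw [h]
    simp [hcard]
  -- lower bound for each block
  have hblock : ∀ k ∈ Finset.range K, c / 2 ≤ ∑ i ∈ F k, ‖(s u) i‖ := by
    intro k hk
    have hpt : ∀ i ∈ F k, ‖x (n k) i‖ - ∑ j ∈ (Finset.range K).erase k, ‖x (n j) i‖
        ≤ ‖(s u) i‖ := by
      intro i _
      have hdecomp : (s u) i = x (n k) i + ∑ j ∈ (Finset.range K).erase k, x (n j) i := by
        rw [hsucoord i, ← Finset.add_sum_erase _ _ hk]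
      have htri : ‖x (n k) i‖ ≤ ‖(s u) i‖ + ‖∑ j ∈ (Finset.range K).erase k, x (n j) i‖ := by
        rw [hdecomp]
        calc ‖x (n k) i‖
            = ‖(x (n k) i + ∑ j ∈ (Finset.range K).erase k, x (n j) i)
                - ∑ j ∈ (Finset.range K).erase k, x (n j) i‖ := by ring_nf
          _ ≤ _ := norm_sub_le _ _
      have hnormsum : ‖∑ j ∈ (Finset.range K).erase k, x (n j) i‖
          ≤ ∑ j ∈ (Finset.range K).erase k, ‖x (n j) i‖ := norm_sum_le _ _
      linarith
    have hsum1 : ∑ i ∈ F k, (‖x (n k) i‖ - ∑ j ∈ (Finset.range K).erase k, ‖x (n j) i‖)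
        ≤ ∑ i ∈ F k, ‖(s u) i‖ := Finset.sum_le_sum hpt
    rw [Finset.sum_sub_distrib] at hsum1
    have hswap : ∑ i ∈ F k, ∑ j ∈ (Finset.range K).erase k, ‖x (n j) i‖
        = ∑ j ∈ (Finset.range K).erase k, ∑ i ∈ F k, ‖x (n j) i‖ := Finset.sum_comm
    have hcrossbd : ∑ j ∈ (Finset.range K).erase k, ∑ i ∈ F k, ‖x (n j) i‖
        ≤ (K - 1 : ℝ) * δ := by
      have hcard : ((Finset.range K).erase k).card = K - 1 := by
        rw [Finset.card_erase_of_mem hk, Finset.card_range]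
      calc ∑ j ∈ (Finset.range K).erase k, ∑ i ∈ F k, ‖x (n j) i‖
          ≤ ∑ j ∈ (Finset.range K).erase k, δ :=
            Finset.sum_le_sum fun j hj => hcross j k (Finset.ne_of_mem_erase hj)
        _ = (((Finset.range K).erase k).card : ℝ) * δ := by
            rw [Finset.sum_const, nsmul_eq_mul]
        _ ≤ (K - 1 : ℝ) * δ := by
            rw [hcard]
            have hK1 : 1 ≤ K := Nat.le_add_left 1 _
            rw [Nat.cast_sub hK1]
            norm_num
    have hmk := hmain k
    have hKpos : (1:ℝ) ≤ (K:ℝ) := by exact_mod_cast Nat.le_add_left 1 _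
    have hδval : (2 * ((K:ℝ) + 1)) * δ = c := by
      rw [hδdef]; field_simp
    -- c - 2δ - (K-1)δ = c - (K+1)δ = c - c/2 = c/2
    have : c - 2 * δ - (K - 1 : ℝ) * δ = c / 2 := by
      have : ((K:ℝ) + 1) * δ = c / 2 := by linarith [hδval]
      nlinarith [this]
    linarith [hsum1, hswap ▸ hcrossbd]
  -- total lower bound on ‖s u‖
  have hdisj : (↑(Finset.range K) : Set ℕ).PairwiseDisjoint F := by
    intro a _ b _ hab
    exact hFdisj a b hab
  have hlow : (K : ℝ) * (c / 2) ≤ ‖s u‖ := by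
    calc (K : ℝ) * (c / 2) = ∑ _k ∈ Finset.range K, c / 2 := by
          rw [Finset.sum_const, Finset.card_range, nsmul_eq_mul]
      _ ≤ ∑ k ∈ Finset.range K, ∑ i ∈ F k, ‖(s u) i‖ := Finset.sum_le_sum hblock
      _ = ∑ i ∈ (Finset.range K).biUnion F, ‖(s u) i‖ := (Finset.sum_biUnion hdisj).symm
      _ ≤ ‖s u‖ := sum_le_hasSum _ (fun i _ => norm_nonneg _) (aux_l1_hasSum (s u))
  have hup : ‖s u‖ ≤ ‖s‖ * ‖u‖ := s.le_opNorm u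
  have hKpos : (0:ℝ) < (K:ℝ) := by exact_mod_cast Nat.succ_pos _
  have h1 : ((K:ℝ) * (c / 2)) ^ 2 ≤ (‖s‖ * ‖u‖) ^ 2 :=
    pow_le_pow_left₀ (by positivity) (hlow.trans hup) 2
  have h2 : (‖s‖ * ‖u‖) ^ 2 = ‖s‖ ^ 2 * (K:ℝ) := by rw [mul_pow, hu2]
  have h3 : (K:ℝ) ^ 2 * (c ^ 2 / 4) ≤ ‖s‖ ^ 2 * (K:ℝ) := by nlinarith [h1, h2]
  have h4 : (K:ℝ) * (c ^ 2 / 4) ≤ ‖s‖ ^ 2 := by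
    have h5 : ((K:ℝ) * (c ^ 2 / 4)) * (K:ℝ) ≤ ‖s‖ ^ 2 * (K:ℝ) := by nlinarith [h3]
    exact le_of_mul_le_mul_right h5 hKpos
  have hfinal : (K:ℝ) ≤ (2 * ‖s‖ / c) ^ 2 := by
    rw [div_pow, mul_pow]
    rw [le_div_iff₀ (by positivity : (0:ℝ) < c ^ 2)]
    nlinarith [h4]
  have hcontr : ((2 * ‖s‖ / c) ^ 2 : ℝ) < (K:ℝ) := by
    rw [hKdef]
    push_cast
    have := Nat.le_ceil ((2 * ‖s‖ / c) ^ 2)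
    linarith
  linarith

end Aux

set_option maxHeartbeats 1000000 in
set_option synthInstance.maxHeartbeats 400000 in
/-- Given a bounded linear surjection `q : ℓ¹(ℕ) → ℓ²(ℕ)`, the induced map
`α : ℓ¹(ℕ)^~ → ℓ²(ℕ)^~`, `x + λ1 ↦ q(x) + λ1`, between the unitizations of `ℓ¹(ℕ)` and
`ℓ²(ℕ)` (both carrying the trivial product) is a continuous surjective algebra
homomorphism with `ker α = ker q`; the corresponding extension
`0 → ker α → ℓ¹(ℕ)^~ → ℓ²(ℕ)^~ → 0` is singular and splits algebraically, but it is
not admissible. -/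
theorem unitization_extension_of_ellOne_onto_ellTwo
    {𝕜 : Type*} [RCLike 𝕜]
    (q : lp (fun _ : ℕ => 𝕜) 1 →L[𝕜] lp (fun _ : ℕ => 𝕜) 2)
    (hq : Function.Surjective q) :
    ∃ α : TrivSqZeroExt 𝕜 (lp (fun _ : ℕ => 𝕜) 1) →ₙₐ[𝕜]
        TrivSqZeroExt 𝕜 (lp (fun _ : ℕ => 𝕜) 2),
      (∀ a, α a = inl a.fst + inr (q a.snd)) ∧
      Continuous α ∧
      Function.Surjective α ∧
      (∀ a, α a = 0 ↔ (a.fst = 0 ∧ q a.snd = 0)) ∧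
      (∀ a b, α a = 0 → α b = 0 → a * b = 0) ∧
      (∃ ρ : TrivSqZeroExt 𝕜 (lp (fun _ : ℕ => 𝕜) 2) →ₙₐ[𝕜]
          TrivSqZeroExt 𝕜 (lp (fun _ : ℕ => 𝕜) 1), ∀ c, α (ρ c) = c) ∧
      ¬ (∃ ρ : TrivSqZeroExt 𝕜 (lp (fun _ : ℕ => 𝕜) 2) →L[𝕜]
          TrivSqZeroExt 𝕜 (lp (fun _ : ℕ => 𝕜) 1), ∀ c, α (ρ c) = c) := by
  set qₗ : lp (fun _ : ℕ => 𝕜) 1 →ₗ[𝕜] lp (fun _ : ℕ => 𝕜) 2 := q.toLinearMap with hqₗ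
  set α : TrivSqZeroExt 𝕜 (lp (fun _ : ℕ => 𝕜) 1) →ₙₐ[𝕜]
      TrivSqZeroExt 𝕜 (lp (fun _ : ℕ => 𝕜) 2) :=
    AlgHom.toNonUnitalAlgHom (TrivSqZeroExt.map qₗ) with hαdef
  have hα : ∀ a, α a = inl a.fst + inr (q a.snd) := by
    intro a
    show (TrivSqZeroExt.map qₗ) a = _
    conv_lhs => rw [← inl_fst_add_inr_snd_eq (TrivSqZeroExt.map qₗ a)]
    rw [fst_map, snd_map]; rfl
  have hpair : ∀ (r : 𝕜) (m : lp (fun _ : ℕ => 𝕜) 2),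
      (inl r + inr m : TrivSqZeroExt 𝕜 (lp (fun _ : ℕ => 𝕜) 2)) = 0 ↔ r = 0 ∧ m = 0 := by
    intro r m
    constructor
    · intro h
      exact ⟨by simpa using congrArg fst h, by simpa using congrArg snd h⟩
    · rintro ⟨h1, h2⟩; rw [h1, h2]; simp
  refine ⟨α, hα, ?_, ?_, ?_, ?_, ?_, ?_⟩
  · have : ⇑α = fun a => (inl a.fst + inr (q a.snd) :
        TrivSqZeroExt 𝕜 (lp (fun _ : ℕ => 𝕜) 2)) := funext hα
    rw [this]
    exact (TrivSqZeroExt.continuous_inl.comp TrivSqZeroExt.continuous_fst).add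
      (TrivSqZeroExt.continuous_inr.comp (q.continuous.comp TrivSqZeroExt.continuous_snd))
  · intro c
    obtain ⟨x, hx⟩ := hq c.snd
    refine ⟨inl c.fst + inr x, ?_⟩
    rw [hα]
    refine TrivSqZeroExt.ext ?_ ?_ <;> simp [hx]
  · intro a
    rw [hα, hpair]
  · intro a b ha hb
    rw [hα, hpair] at ha hb
    refine TrivSqZeroExt.ext ?_ ?_
    · simp [fst_mul, ha.1, hb.1]
    · simp [snd_mul, ha.1, hb.1]
  · have hq' : LinearMap.range qₗ = ⊤ := LinearMap.range_eq_top.2 hq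
    obtain ⟨g, hg⟩ := qₗ.exists_rightInverse_of_surjective hq'
    refine ⟨AlgHom.toNonUnitalAlgHom (TrivSqZeroExt.map g), fun c => ?_⟩
    have hgc : ∀ y, qₗ (g y) = y := fun y =>
      congrArg (fun (h : _ →ₗ[𝕜] _) => h y) hg
    have hρ : (AlgHom.toNonUnitalAlgHom (TrivSqZeroExt.map g)) c
        = inl c.fst + inr (g c.snd) := by
      show (TrivSqZeroExt.map g) c = _
      conv_lhs => rw [← inl_fst_add_inr_snd_eq (TrivSqZeroExt.map g c)]
      rw [fst_map, snd_map]
    rw [hρ, hα]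
    refine TrivSqZeroExt.ext ?_ ?_
    · simp
    · have hgc' : q (g c.snd) = c.snd := hgc c.snd
      simpa using hgc'
  · rintro ⟨ρ, hρ⟩
    refine key_no_right_inverse q ⟨(sndCLM 𝕜 _).comp (ρ.comp (inrCLM 𝕜 _)), fun y => ?_⟩
    have h2 := congrArg snd (hρ (inr y))
    rw [hα] at h2
    simpa using h2
end

section
/- Let B be a Banach algebra over 𝕂, let ψ : B → ℓ²(ℕ)^~ be a continuous algebra homomorphism, and write ψ(T) = ψ₀(T) + θ(T)1 with ψ₀(T) ∈ ℓ²(ℕ) and θ(T) ∈ 𝕂. Regard X = 𝕂 as a Banach B-bimodule via T·λ = θ(T)λ = λ·T. For U ∈ B(ℓ²(ℕ)) define Υ_U(S,T) = ⟨U(ψ₀(S)), ψ₀(T)⟩ for S, T ∈ B, where ⟨x, y⟩ = Σₙ xₙyₙ is the bilinear duality pairing on ℓ²(ℕ). Then Υ_U is a continuous bilinear map and a 2-cocycle: θ(a)Υ_U(b,c) − Υ_U(ab,c) + Υ_U(a,bc) − Υ_U(a,b)θ(c) = 0 for all a, b, c ∈ B; moreover the map U ↦ Υ_U is linear. -/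
/- Here `TrivSqZeroExt 𝕜 (lp (fun _ : ℕ => 𝕜) 2)` is the unitization `ℓ²(ℕ)^~` of
`ℓ²(ℕ)` equipped with the trivial (zero) product; for a homomorphism `ψ : B → ℓ²(ℕ)^~`
we write `ψ(T) = ψ₀(T) + θ(T)1`, where `ψ₀ T = (ψ T).snd` and `θ T = (ψ T).fst`.
The one-dimensional Banach `B`-bimodule `X = 𝕜` carries the actions
`T·λ = θ(T)λ = λ·T`. -/

variable {𝕜 : Type*} [RCLike 𝕜]
variable {B : Type*} [NonUnitalNormedRing B] [NormedSpace 𝕜 B]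
  [IsScalarTower 𝕜 B B] [SMulCommClass 𝕜 B B] [CompleteSpace B]

/-- The bilinear duality pairing `⟨x, y⟩ = ∑ₙ xₙyₙ` on `ℓ²(ℕ)`. -/
noncomputable def ellTwoPairing (x y : lp (fun _ : ℕ => 𝕜) 2) : 𝕜 :=
  ∑' n, x n * y n

/-- The 2-cocycle `Υ_U(S,T) = ⟨U(ψ₀(S)), ψ₀(T)⟩` associated with a bounded operator `U`
on `ℓ²(ℕ)`. -/
noncomputable def Upsilon (ψ : B →ₙₐ[𝕜] TrivSqZeroExt 𝕜 (lp (fun _ : ℕ => 𝕜) 2))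
    (U : lp (fun _ : ℕ => 𝕜) 2 →L[𝕜] lp (fun _ : ℕ => 𝕜) 2) (S T : B) : 𝕜 :=
  ellTwoPairing (U ((ψ S).snd)) ((ψ T).snd)

lemma ellTwoPairing_eq_inner (x y : lp (fun _ : ℕ => 𝕜) 2) :
    ellTwoPairing x y = inner (𝕜 := 𝕜) (star x) y := by
  rw [lp.inner_eq_tsum]
  simp [ellTwoPairing, lp.coeFn_star, RCLike.inner_apply]
  exact tsum_congr fun n => mul_comm _ _

lemma ellTwoPairing_add_left (x x' y : lp (fun _ : ℕ => 𝕜) 2) :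
    ellTwoPairing (x + x') y = ellTwoPairing x y + ellTwoPairing x' y := by
  simp [ellTwoPairing_eq_inner, star_add, inner_add_left]

lemma ellTwoPairing_add_right (x y y' : lp (fun _ : ℕ => 𝕜) 2) :
    ellTwoPairing x (y + y') = ellTwoPairing x y + ellTwoPairing x y' := by
  simp [ellTwoPairing_eq_inner, inner_add_right]

lemma ellTwoPairing_smul_left (c : 𝕜) (x y : lp (fun _ : ℕ => 𝕜) 2) :
    ellTwoPairing (c • x) y = c * ellTwoPairing x y := by
  simp [ellTwoPairing_eq_inner, star_smul, inner_smul_left]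

lemma ellTwoPairing_smul_right (c : 𝕜) (x y : lp (fun _ : ℕ => 𝕜) 2) :
    ellTwoPairing x (c • y) = c * ellTwoPairing x y := by
  simp [ellTwoPairing_eq_inner, inner_smul_right]

lemma ellTwoPairing_continuous :
    Continuous (fun p : (lp (fun _ : ℕ => 𝕜) 2) × (lp (fun _ : ℕ => 𝕜) 2) =>
      ellTwoPairing p.1 p.2) := by
  simp only [ellTwoPairing_eq_inner]
  exact Continuous.inner (continuous_star.comp continuous_fst) continuous_snd

lemma snd_psi_mul (ψ : B →ₙₐ[𝕜] TrivSqZeroExt 𝕜 (lp (fun _ : ℕ => 𝕜) 2)) (a b : B) :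
    (ψ (a * b)).snd = (ψ a).fst • (ψ b).snd + (ψ b).fst • (ψ a).snd := by
  rw [map_mul, TrivSqZeroExt.snd_mul, op_smul_eq_smul]

/-- For every `U ∈ B(ℓ²(ℕ))`, the map `Υ_U(S,T) = ⟨U(ψ₀(S)), ψ₀(T)⟩` is a continuous
bilinear map on `B × B` and is a 2-cocycle with respect to the one-dimensional Banach
`B`-bimodule `X = 𝕜` with actions given by `θ`; moreover `U ↦ Υ_U` is linear. -/
theorem upsilon_is_continuous_bilinear_cocycle_and_linear_in_U
    (ψ : B →ₙₐ[𝕜] TrivSqZeroExt 𝕜 (lp (fun _ : ℕ => 𝕜) 2)) (hψ : Continuous ψ) :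
    (∀ U, Continuous (fun p : B × B => Upsilon ψ U p.1 p.2)) ∧
    (∀ U (T : B), IsLinearMap 𝕜 (fun S : B => Upsilon ψ U S T)) ∧
    (∀ U (S : B), IsLinearMap 𝕜 (fun T : B => Upsilon ψ U S T)) ∧
    (∀ U (a b c : B),
      (ψ a).fst * Upsilon ψ U b c - Upsilon ψ U (a * b) c + Upsilon ψ U a (b * c)
        - Upsilon ψ U a b * (ψ c).fst = 0) ∧
    (∀ U V (S T : B), Upsilon ψ (U + V) S T = Upsilon ψ U S T + Upsilon ψ V S T) ∧
    (∀ (c : 𝕜) U (S T : B), Upsilon ψ (c • U) S T = c * Upsilon ψ U S T) := by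
  have hsnd : Continuous (fun T : B => (ψ T).snd) :=
    TrivSqZeroExt.continuous_snd.comp hψ
  refine ⟨?_, ?_, ?_, ?_, ?_, ?_⟩
  · intro U
    exact ellTwoPairing_continuous.comp
      (((U.continuous.comp hsnd).comp continuous_fst).prodMk (hsnd.comp continuous_snd))
  · intro U T
    refine ⟨fun S S' => ?_, fun c S => ?_⟩
    · simp [Upsilon, map_add, TrivSqZeroExt.snd_add, ellTwoPairing_add_left]
    · simp [Upsilon, map_smul, TrivSqZeroExt.snd_smul, ellTwoPairing_smul_left]
  · intro U S
    refine ⟨fun T T' => ?_, fun c T => ?_⟩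
    · simp [Upsilon, map_add, TrivSqZeroExt.snd_add, ellTwoPairing_add_right]
    · simp [Upsilon, map_smul, TrivSqZeroExt.snd_smul, ellTwoPairing_smul_right]
  · intro U a b c
    simp only [Upsilon, snd_psi_mul, map_add, map_smul,
      ellTwoPairing_add_left, ellTwoPairing_add_right,
      ellTwoPairing_smul_left, ellTwoPairing_smul_right]
    ring
  · intro U V S T
    simp [Upsilon, ellTwoPairing_add_left]
  · intro c U S T
    simp [Upsilon, ellTwoPairing_smul_left]
end

section
/- Let B be a Banach algebra over 𝕂, let ψ : B → ℓ²(ℕ)^~ be a continuous surjective algebra homomorphism with a continuous algebra homomorphism right inverse ρ : ℓ²(ℕ)^~ → B, and write ψ(T) = ψ₀(T) + θ(T)1. Regard X = 𝕂 as a Banach B-bimodule via T·λ = θ(T)λ = λ·T, and for U ∈ B(ℓ²(ℕ)) let Υ_U(S,T) = ⟨U(ψ₀(S)), ψ₀(T)⟩. If there exists a bounded linear map Ω : B → 𝕂 such that Υ_U(a,b) = θ(a)Ω(b) − Ω(ab) + Ω(a)θ(b) for all a, b ∈ B (i.e. Υ_U is a 2-coboundary), then U = 0. -/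
/- Here `TrivSqZeroExt 𝕜 (lp (fun _ : ℕ => 𝕜) 2)` is the unitization `ℓ²(ℕ)^~` of
`ℓ²(ℕ)` equipped with the trivial (zero) product; for a homomorphism `ψ : B → ℓ²(ℕ)^~`
we write `ψ(T) = ψ₀(T) + θ(T)1`, where `ψ₀ T = (ψ T).snd` and `θ T = (ψ T).fst`.
The one-dimensional Banach `B`-bimodule `X = 𝕜` carries the actions
`T·λ = θ(T)λ = λ·T`. -/

variable {𝕜 : Type*} [RCLike 𝕜]
variable {B : Type*} [NonUnitalNormedRing B] [NormedSpace 𝕜 B]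
  [IsScalarTower 𝕜 B B] [SMulCommClass 𝕜 B B] [CompleteSpace B]

/-- Suppose `ψ : B → ℓ²(ℕ)^~` is a continuous surjective algebra homomorphism with a
right inverse `ρ` which is a continuous algebra homomorphism. If for some
`U ∈ B(ℓ²(ℕ))` the 2-cocycle `Υ_U` is a 2-coboundary, i.e.
`Υ_U(a,b) = θ(a)Ω(b) − Ω(ab) + Ω(a)θ(b)` for some bounded linear functional `Ω`,
then `U = 0`. -/
theorem upsilon_coboundary_implies_zero
    (ψ : B →ₙₐ[𝕜] TrivSqZeroExt 𝕜 (lp (fun _ : ℕ => 𝕜) 2))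
    (hψcont : Continuous ψ) (hψsurj : Function.Surjective ψ)
    (ρ : TrivSqZeroExt 𝕜 (lp (fun _ : ℕ => 𝕜) 2) →ₙₐ[𝕜] B)
    (hρcont : Continuous ρ) (hρ : ∀ c, ψ (ρ c) = c)
    (U : lp (fun _ : ℕ => 𝕜) 2 →L[𝕜] lp (fun _ : ℕ => 𝕜) 2)
    (Ω : B →L[𝕜] 𝕜)
    (hcobound : ∀ a b : B,
      Upsilon ψ U a b = (ψ a).fst * Ω b - Ω (a * b) + Ω a * (ψ b).fst) :
    U = 0 := by
  have key : ∀ x y : lp (fun _ : ℕ => 𝕜) 2, ellTwoPairing (U x) y = 0 := by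
    intro x y
    have h := hcobound (ρ (TrivSqZeroExt.inr x)) (ρ (TrivSqZeroExt.inr y))
    rw [← map_mul ρ, TrivSqZeroExt.inr_mul_inr, map_zero ρ] at h
    simp only [Upsilon, hρ, TrivSqZeroExt.snd_inr, TrivSqZeroExt.fst_inr, map_zero,
      zero_mul, mul_zero, sub_zero, zero_sub, add_zero, neg_zero, zero_add] at h
    simpa using h
  ext x n
  simp only [ContinuousLinearMap.zero_apply, lp.coeFn_zero, Pi.zero_apply]
  have h := key x (lp.single 2 n 1)
  rw [ellTwoPairing] at h
  rw [tsum_eq_single n (fun m hm => by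
    rw [lp.single_apply_ne 2 n 1 hm, mul_zero])] at h
  rw [lp.single_apply_self, mul_one] at h
  simpa using h
end

section
/- Let B be a Banach algebra over 𝕂 and suppose there is a continuous surjective algebra homomorphism ψ : B → ℓ²(ℕ)^~ with a continuous algebra homomorphism right inverse. Then there exist a one-dimensional Banach B-bimodule X and a linear injection from B(ℓ²(ℕ)) into the second continuous Hochschild cohomology group H²(B, X) = Z²(B, X)/N²(B, X); in particular H²(B, X) ≠ {0}. -/
set_option synthInstance.maxHeartbeats 1000000
set_option maxHeartbeats 1000000

/- Here `TrivSqZeroExt 𝕜 (lp (fun _ : ℕ => 𝕜) 2)` is the unitization `ℓ²(ℕ)^~` of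
`ℓ²(ℕ)` equipped with the trivial (zero) product. A one-dimensional Banach `B`-bimodule
`X = 𝕜` is given by a continuous character `θ : B → 𝕜` via the actions
`T·λ = θ(T)λ = λ·T`; with respect to these actions we form the second continuous
Hochschild cohomology group `H²(B, X) = Z²(B, X)/N²(B, X)`. -/

variable {𝕜 : Type*} [RCLike 𝕜]
variable {B : Type*} [NonUnitalNormedRing B] [NormedSpace 𝕜 B]
  [IsScalarTower 𝕜 B B] [SMulCommClass 𝕜 B B] [CompleteSpace B]

noncomputable def l2pairing : lp (fun _ : ℕ => 𝕜) 2 →L[𝕜] lp (fun _ : ℕ => 𝕜) 2 →L[𝕜] 𝕜 :=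
  LinearMap.mkContinuous₂
    (LinearMap.mk₂ 𝕜 (fun u v => (inner 𝕜 (star u) v : 𝕜))
      (fun u u' v => by show (inner 𝕜 (star (u+u')) v : 𝕜) = inner 𝕜 (star u) v + inner 𝕜 (star u') v; rw [star_add, inner_add_left])
      (fun c u v => by
        show (inner 𝕜 (star (c • u)) v : 𝕜) = c • inner 𝕜 (star u) v
        rw [star_smul, inner_smul_left, starRingEnd_apply, star_star, smul_eq_mul])
      (fun u v v' => by show (inner 𝕜 (star u) (v+v') : 𝕜) = _; rw [inner_add_right])
      (fun c u v => by show (inner 𝕜 (star u) (c • v) : 𝕜) = c • inner 𝕜 (star u) v; rw [inner_smul_right, smul_eq_mul]))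
    1
    (fun u v => by
      simpa [norm_star] using norm_inner_le_norm (𝕜 := 𝕜) (star u) v)

theorem l2pairing_apply (u v : lp (fun _ : ℕ => 𝕜) 2) :
    l2pairing u v = (inner 𝕜 (star u) v : 𝕜) := rfl

theorem l2pairing_eq_zero {u : lp (fun _ : ℕ => 𝕜) 2}
    (h : ∀ v, l2pairing u v = (0 : 𝕜)) : u = 0 := by
  have h2 := h (star u)
  rw [l2pairing_apply] at h2
  have : star u = 0 := inner_self_eq_zero.mp h2
  simpa using congrArg star this


/-- `Z²(B, 𝕜)`: the space of continuous 2-cocycles `Υ : B × B → 𝕜` (realised as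
continuous bilinear maps `B →L[𝕜] B →L[𝕜] 𝕜`) with respect to the one-dimensional
bimodule structure on `𝕜` given by the character `θ`. -/
def twoCocycles (θ : B →ₙₐ[𝕜] 𝕜) : Submodule 𝕜 (B →L[𝕜] B →L[𝕜] 𝕜) where
  carrier := {Υ | ∀ a b c : B, θ a * Υ b c - Υ (a * b) c + Υ a (b * c) - Υ a b * θ c = 0}
  add_mem' := by
    intro Υ₁ Υ₂ h₁ h₂
    simp only [Set.mem_setOf_eq] at *
    intro a b c
    have e₁ := h₁ a b c
    have e₂ := h₂ a b c
    simp only [ContinuousLinearMap.add_apply]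
    linear_combination e₁ + e₂
  zero_mem' := by
    simp only [Set.mem_setOf_eq]
    intro a b c
    simp
  smul_mem' := by
    intro t Υ h
    simp only [Set.mem_setOf_eq] at *
    intro a b c
    have e := h a b c
    simp only [ContinuousLinearMap.smul_apply, smul_eq_mul]
    linear_combination t * e


/-- The `𝕜`-module structure on `Z²(B, 𝕜)` (made explicit to aid instance resolution). -/
noncomputable instance instAddCommGroupTwoCocycles (θ : B →ₙₐ[𝕜] 𝕜) :
    AddCommGroup (twoCocycles θ) :=
  @Submodule.addCommGroup 𝕜 (B →L[𝕜] B →L[𝕜] 𝕜) _ _ _ (twoCocycles θ)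

/-- `N²(B, 𝕜)`: the subspace of `Z²(B, 𝕜)` consisting of the 2-coboundaries
`δ¹Ω : (a, b) ↦ θ(a)Ω(b) − Ω(ab) + Ω(a)θ(b)` for bounded linear `Ω : B → 𝕜`. -/
def twoCoboundaries (θ : B →ₙₐ[𝕜] 𝕜) : Submodule 𝕜 (twoCocycles θ) where
  carrier := {υ | ∃ Ω : B →L[𝕜] 𝕜, ∀ a b : B,
    (υ : B →L[𝕜] B →L[𝕜] 𝕜) a b = θ a * Ω b - Ω (a * b) + Ω a * θ b}
  add_mem' := by
    rintro υ₁ υ₂ ⟨Ω₁, h₁⟩ ⟨Ω₂, h₂⟩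
    refine ⟨Ω₁ + Ω₂, fun a b => ?_⟩
    have e₁ := h₁ a b
    have e₂ := h₂ a b
    simp only [Submodule.coe_add, ContinuousLinearMap.add_apply] at *
    linear_combination e₁ + e₂
  zero_mem' := by
    refine ⟨0, fun a b => ?_⟩
    simp
  smul_mem' := by
    rintro t υ ⟨Ω, h⟩
    refine ⟨t • Ω, fun a b => ?_⟩
    have e := h a b
    simp only [Submodule.coe_smul, ContinuousLinearMap.smul_apply, smul_eq_mul] at *
    linear_combination t * e

/-- If a Banach algebra `B` admits a continuous surjective algebra homomorphism `ψ` onto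
`ℓ²(ℕ)^~` with a right inverse which is a continuous algebra homomorphism, then there
exist a one-dimensional Banach `B`-bimodule `X` (given by a continuous character `θ`)
and a linear injection from `B(ℓ²(ℕ))` into `H²(B, X) = Z²(B, X)/N²(B, X)`;
in particular `H²(B, X) ≠ {0}`. -/
theorem exists_linear_injection_into_second_cohomology
    (ψ : B →ₙₐ[𝕜] TrivSqZeroExt 𝕜 (lp (fun _ : ℕ => 𝕜) 2))
    (hψcont : Continuous ψ) (hψsurj : Function.Surjective ψ)
    (hsplit : ∃ ρ : TrivSqZeroExt 𝕜 (lp (fun _ : ℕ => 𝕜) 2) →ₙₐ[𝕜] B,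
      Continuous ρ ∧ ∀ c, ψ (ρ c) = c) :
    ∃ θ : B →ₙₐ[𝕜] 𝕜, Continuous θ ∧
      ∃ ι : (lp (fun _ : ℕ => 𝕜) 2 →L[𝕜] lp (fun _ : ℕ => 𝕜) 2) →ₗ[𝕜]
          (twoCocycles θ ⧸ twoCoboundaries θ),
        Function.Injective ι ∧ Nontrivial (twoCocycles θ ⧸ twoCoboundaries θ) := by
  classical
  obtain ⟨ρ, hρcont, hρ⟩ := hsplit
  set A := lp (fun _ : ℕ => 𝕜) 2 with hA
  let θ : B →ₙₐ[𝕜] 𝕜 := ((TrivSqZeroExt.fstHom 𝕜 𝕜 A).toNonUnitalAlgHom).comp ψ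
  have hθ : ∀ a, θ a = (ψ a).fst := fun a => rfl
  have hθc : Continuous θ := TrivSqZeroExt.continuous_fst.comp hψcont
  let ψL : B →L[𝕜] TrivSqZeroExt 𝕜 A :=
    { toFun := ψ, map_add' := map_add ψ, map_smul' := map_smul ψ, cont := hψcont }
  let σ : B →L[𝕜] A := (TrivSqZeroExt.sndCLM 𝕜 A).comp ψL
  have hσ : ∀ a, σ a = (ψ a).snd := fun a => rfl
  have hσmul : ∀ a b : B, σ (a * b) = θ a • σ b + θ b • σ a := by
    intro a b
    rw [hσ, map_mul, TrivSqZeroExt.snd_mul, hθ, hθ, hσ, hσ, op_smul_eq_smul]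
  let Υ : (A →L[𝕜] A) → (B →L[𝕜] B →L[𝕜] 𝕜) := fun T =>
    ((l2pairing.comp (T.comp σ)).flip.comp σ).flip
  have hΥ : ∀ (T : A →L[𝕜] A) (a b : B), Υ T a b = l2pairing (T (σ a)) (σ b) :=
    fun T a b => rfl
  have hcoc : ∀ T, Υ T ∈ twoCocycles θ := by
    intro T a b c
    simp only [hΥ, hσmul, map_add, map_smul, ContinuousLinearMap.add_apply,
      ContinuousLinearMap.coe_smul', Pi.smul_apply, smul_eq_mul]
    ring
  let Φ : (A →L[𝕜] A) →ₗ[𝕜] twoCocycles θ :=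
    { toFun := fun T => ⟨Υ T, hcoc T⟩
      map_add' := fun T T' => by
        apply Subtype.ext
        ext a b
        simp only [Submodule.coe_add, ContinuousLinearMap.add_apply, hΥ, map_add]
      map_smul' := fun c T => by
        apply Subtype.ext
        ext a b
        simp only [RingHom.id_apply, SetLike.val_smul, ContinuousLinearMap.coe_smul',
          Pi.smul_apply, ContinuousLinearMap.smul_apply, hΥ, map_smul, smul_eq_mul] }
  let ι : (A →L[𝕜] A) →ₗ[𝕜] (twoCocycles θ ⧸ twoCoboundaries θ) :=
    (twoCoboundaries θ).mkQ.comp Φ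
  have hkey : ∀ S : A →L[𝕜] A, Φ S ∈ twoCoboundaries θ → S = 0 := by
    intro S hS
    obtain ⟨Ω, hΩ⟩ := hS
    apply ContinuousLinearMap.ext
    intro x
    show S x = (0 : A →L[𝕜] A) x
    rw [ContinuousLinearMap.zero_apply]
    apply l2pairing_eq_zero
    intro y
    have hθx : θ (ρ (TrivSqZeroExt.inr x)) = 0 := by
      rw [hθ, hρ, TrivSqZeroExt.fst_inr]
    have hθy : θ (ρ (TrivSqZeroExt.inr y)) = 0 := by
      rw [hθ, hρ, TrivSqZeroExt.fst_inr]
    have hσx : σ (ρ (TrivSqZeroExt.inr x)) = x := by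
      rw [hσ, hρ, TrivSqZeroExt.snd_inr]
    have hσy : σ (ρ (TrivSqZeroExt.inr y)) = y := by
      rw [hσ, hρ, TrivSqZeroExt.snd_inr]
    have hab : ρ (TrivSqZeroExt.inr x) * ρ (TrivSqZeroExt.inr y) = 0 := by
      rw [← map_mul, TrivSqZeroExt.inr_mul_inr, map_zero]
    have h1 := hΩ (ρ (TrivSqZeroExt.inr x)) (ρ (TrivSqZeroExt.inr y))
    have h2 : (↑(Φ S) : B →L[𝕜] B →L[𝕜] 𝕜) (ρ (TrivSqZeroExt.inr x)) (ρ (TrivSqZeroExt.inr y))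
        = l2pairing (S x) y := by
      show Υ S _ _ = _
      rw [hΥ, hσx, hσy]
    rw [h2, hθx, hθy, hab, map_zero] at h1
    rw [h1]; ring
  have hinj : Function.Injective ι := by
    intro T T' h
    have hz : ι (T - T') = 0 := by rw [map_sub, h, sub_self]
    have hmem : Φ (T - T') ∈ twoCoboundaries θ := by
      rwa [LinearMap.comp_apply, Submodule.mkQ_apply, Submodule.Quotient.mk_eq_zero] at hz
    exact sub_eq_zero.mp (hkey _ hmem)
  have hx0 : (lp.single 2 0 (1 : 𝕜) : A) ≠ 0 := by
    intro h
    have h0 : ((lp.single 2 0 (1 : 𝕜) : A) : ∀ _ : ℕ, 𝕜) 0 = ((0 : A) : ∀ _ : ℕ, 𝕜) 0 := by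
      rw [h]
    rw [lp.single_apply_self] at h0
    simp only [lp.coeFn_zero, Pi.zero_apply] at h0
    exact one_ne_zero h0
  have hone : (1 : A →L[𝕜] A) ≠ 0 := by
    intro h
    apply hx0
    have := congrArg (fun f : A →L[𝕜] A => f (lp.single 2 0 (1 : 𝕜))) h
    simpa using this
  refine ⟨θ, hθc, ι, hinj, ⟨⟨ι 1, 0, ?_⟩⟩⟩
  intro h
  exact hone (hinj (h.trans (map_zero ι).symm))
end
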